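/- The cubical nerve of a small category C, defined by (NC)_n = Cat([1]^n, C) (functors from the poset [1]^n to C), is a functor N : Cat → cSet that is full and faithful. -/

import Mathlib

/-! ## Combinatorics of the cube category: faces, degeneracies, connections.
We model the poset `[1]^n` as `Fin n → Bool` with the pointwise order
(`false = 0`, `true = 1`).  Indices are 0-based: the map `cubeFace i ε`
inserts `ε` in the `i`-th coordinate (so it corresponds to `∂_{i+1,ε}` in
1-based notation), `cubeDeg i` deletes the `i`-th coordinate, and
`cubeConn i ε` merges coordinates `i` and `i+1` using `max` (for `ε = false`,
i.e. the negative connection `γ_{i+1,0}`) or `min` (for `ε = true`, i.e. the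
positive connection `γ_{i+1,1}`). -/

/-- The face map `∂_{i,ε} : [1]^n → [1]^{n+1}` (0-based index `i`),
inserting `ε` in the `i`-th coordinate. -/
def cubeFace {n : ℕ} (i : Fin (n + 1)) (ε : Bool) :
    (Fin n → Bool) → (Fin (n + 1) → Bool) :=
  fun x => Fin.insertNth i ε x

/-- The degeneracy `σ_i : [1]^{n+1} → [1]^n` (0-based index `i`),
deleting the `i`-th coordinate. -/
def cubeDeg {n : ℕ} (i : Fin (n + 1)) :
    (Fin (n + 1) → Bool) → (Fin n → Bool) :=
  fun x j => x (i.succAbove j)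

/-- The connection `γ_{i,ε} : [1]^{n+1} → [1]^n` (0-based index `i`),
taking the `max` (if `ε = false`, the negative connection) or the `min`
(if `ε = true`, the positive connection) of the coordinates `i` and `i+1`. -/
def cubeConn {n : ℕ} (i : Fin n) (ε : Bool) :
    (Fin (n + 1) → Bool) → (Fin n → Bool) :=
  fun x j =>
    if j = i then (if ε then min (x i.castSucc) (x i.succ)
                   else max (x i.castSucc) (x i.succ))
    else if (j : ℕ) < (i : ℕ) then x j.castSucc else x j.succ

open CategoryTheory

/-! ## The cube category `□` (with connections) and cubical sets. -/

/-- Juxtaposition of maps between Boolean cubes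
(`(f ⊗ g)(x, y) = (f x, g y)`). -/
def cubeJuxt {a b c d : ℕ} (f : (Fin a → Bool) → (Fin b → Bool))
    (g : (Fin c → Bool) → (Fin d → Bool)) :
    (Fin (a + c) → Bool) → (Fin (b + d) → Bool) :=
  fun x => Fin.append (f (fun i => x (Fin.castAdd c i)))
    (g (fun j => x (Fin.natAdd a j)))

/-- The maps of the cube category: those maps `[1]^m → [1]^n` generated,
under identities and composition, by the faces, degeneracies and
connections (equivalently, since the cube category is monoidal, also
closed under juxtaposition). -/
inductive IsCubeMap : ∀ {m n : ℕ}, ((Fin m → Bool) → (Fin n → Bool)) → Prop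
  | id (n : ℕ) : IsCubeMap (id : (Fin n → Bool) → (Fin n → Bool))
  | comp {m n k : ℕ} {f : (Fin m → Bool) → (Fin n → Bool)}
      {g : (Fin n → Bool) → (Fin k → Bool)} :
      IsCubeMap f → IsCubeMap g → IsCubeMap (g ∘ f)
  | face {n : ℕ} (i : Fin (n + 1)) (ε : Bool) : IsCubeMap (cubeFace (n := n) i ε)
  | deg {n : ℕ} (i : Fin (n + 1)) : IsCubeMap (cubeDeg (n := n) i)
  | conn {n : ℕ} (i : Fin n) (ε : Bool) : IsCubeMap (cubeConn (n := n) i ε)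
  | tensor {a b c d : ℕ} {f : (Fin a → Bool) → (Fin b → Bool)}
      {g : (Fin c → Bool) → (Fin d → Bool)} :
      IsCubeMap f → IsCubeMap g → IsCubeMap (cubeJuxt f g)

/-- Objects of the cube category `□`: the posets `[1]^n`. -/
structure Box where
  n : ℕ

/-- The object `[1]^n` of the cube category. -/
def bx (n : ℕ) : Box := ⟨n⟩

/-- Morphisms of the cube category. -/
def CubeHom (a b : Box) : Type :=
  { f : (Fin a.n → Bool) → (Fin b.n → Bool) // IsCubeMap f }

instance : Category Box where
  Hom := CubeHom
  id a := ⟨_root_.id, IsCubeMap.id a.n⟩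
  comp f g := ⟨g.1 ∘ f.1, IsCubeMap.comp f.2 g.2⟩
  id_comp := by intros; rfl
  comp_id := by intros; rfl
  assoc := by intros; rfl

/-- The category of cubical sets: presheaves on the cube category. -/
abbrev cSet := Boxᵒᵖ ⥤ Type

/-- The face `∂_{i,ε}` as a morphism of the cube category. -/
def faceHom (n : ℕ) (i : Fin (n + 1)) (ε : Bool) : bx n ⟶ bx (n + 1) :=
  ⟨cubeFace i ε, IsCubeMap.face i ε⟩

/-- The degeneracy `σ_i` as a morphism of the cube category. -/
def degHom (n : ℕ) (i : Fin (n + 1)) : bx (n + 1) ⟶ bx n :=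
  ⟨cubeDeg i, IsCubeMap.deg i⟩

/-- The connection `γ_{i,ε}` as a morphism of the cube category. -/
def connHom (n : ℕ) (i : Fin n) (ε : Bool) : bx (n + 1) ⟶ bx n :=
  ⟨cubeConn i ε, IsCubeMap.conn i ε⟩

/-- Juxtaposition (the monoidal structure of the cube category) on morphisms. -/
def tensorCubeHom {a b c d : ℕ} (f : bx a ⟶ bx b) (g : bx c ⟶ bx d) :
    bx (a + c) ⟶ bx (b + d) :=
  ⟨cubeJuxt f.1 g.1, IsCubeMap.tensor f.2 g.2⟩

/-- Maps of the cube category are monotone. -/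
theorem IsCubeMap.monotone : ∀ {m n : ℕ}
    {f : (Fin m → Bool) → (Fin n → Bool)}, IsCubeMap f → Monotone f := by
  intro m n f h
  induction h with
  | id n => exact monotone_id
  | comp hf hg ihf ihg => exact ihg.comp ihf
  | face i ε =>
    intro a b hab j
    refine Fin.succAboveCases i ?_ ?_ j
    · simp [cubeFace, Fin.insertNth_apply_same]
    · intro j
      simp only [cubeFace, Fin.insertNth_apply_succAbove]
      exact hab j
  | deg i => exact fun a b hab j => hab _
  | conn i ε =>
    intro a b hab j
    simp only [cubeConn]
    split_ifs
    · exact min_le_min (hab _) (hab _)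
    · exact max_le_max (hab _) (hab _)
    · exact hab _
    · exact hab _
  | tensor hf hg ihf ihg =>
    intro a b hab j
    simp only [cubeJuxt]
    refine Fin.addCases ?_ ?_ j
    · intro j
      simp only [Fin.append_left]
      exact ihf (fun i => hab _) j
    · intro j
      simp only [Fin.append_right]
      exact ihg (fun i => hab _) j


/-- The poset `[1]^n`, regarded as a (pre)order category (type synonym to pick
the preorder-category structure rather than the product-category structure). -/
def posetCube (n : ℕ) : Type := Fin n → Bool

noncomputable instance (n : ℕ) : Preorder (posetCube n) := inferInstanceAs (Preorder (Fin n → Bool))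

/-- The functor `[1]^a → [1]^b` of poset categories induced by a morphism of
the cube category. -/
noncomputable def functorOfCubeHom {a b : Box} (f : a ⟶ b) :
    posetCube a.n ⥤ posetCube b.n :=
  Monotone.functor (f := (f.1 : posetCube a.n → posetCube b.n))
    (fun _ _ h => IsCubeMap.monotone f.2 h)

/-! ## The cubical nerve of a category. -/

/-- The cubical nerve of a (small) category: `(N C)_n = Fun([1]^n, C)`,
with cubical structure maps given by precomposition. -/
noncomputable def cubicalNerve (C : Type) [SmallCategory C] : cSet where
  obj b := posetCube b.unop.n ⥤ C
  map g := TypeCat.ofHom (fun F => functorOfCubeHom g.unop ⋙ F)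
  map_id b := by
    ext F : 3
    change functorOfCubeHom (𝟙 b).unop ⋙ F = F
    refine CategoryTheory.Functor.ext (fun x => rfl) (fun x y f => ?_)
    erw [eqToHom_refl, eqToHom_refl, Category.comp_id, Category.id_comp]
    exact congrArg F.map (Subsingleton.elim _ _)
  map_comp f g := by
    ext F : 3
    change functorOfCubeHom (f ≫ g).unop ⋙ F =
      functorOfCubeHom g.unop ⋙ functorOfCubeHom f.unop ⋙ F
    refine CategoryTheory.Functor.ext (fun x => rfl) (fun x y u => ?_)
    erw [eqToHom_refl, eqToHom_refl, Category.comp_id, Category.id_comp]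
    exact congrArg F.map (Subsingleton.elim _ _)

/-- The action of the cubical nerve on functors, by postcomposition. -/
noncomputable def cubicalNerveMap {C D : Type} [SmallCategory C] [SmallCategory D]
    (F : C ⥤ D) : cubicalNerve C ⟶ cubicalNerve D where
  app b := TypeCat.ofHom (fun G => G ⋙ F)
  naturality _ _ _ := rfl

/-! ## Auxiliary material for the proof. -/

open Opposite

namespace CubicalNerveFF

/-- The unique point of `[1]^0`. -/
def pt : posetCube 0 := Fin.elim0

instance : Subsingleton (posetCube 0) := ⟨fun _ _ => funext fun i => i.elim0⟩

lemma hom_subsingleton {n : ℕ} {x y : posetCube n} (f g : x ⟶ y) : f = g :=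
  Subsingleton.elim (α := ULift (PLift (x ≤ y))) f g

/-- In a preorder category, maps between equal objects are `eqToHom`s. -/
lemma map_eq_eqToHom {P : Type} [Preorder P] {E : Type} [SmallCategory E]
    (F : P ⥤ E) {x y : P} (g : x ⟶ y) (h : x = y) :
    F.map g = eqToHom (congrArg F.obj h) := by
  subst h
  rw [show g = 𝟙 x from Subsingleton.elim (α := ULift (PLift (x ≤ x))) _ _]
  simp

/-- In a preorder category, `F.map` only depends on the endpoints. -/
lemma map_congr {P : Type} [Preorder P] {E : Type} [SmallCategory E]
    (F : P ⥤ E) {x y x' y' : P} (g : x ⟶ y) (g' : x' ⟶ y')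
    (hx : x = x') (hy : y = y') :
    F.map g = eqToHom (congrArg F.obj hx) ≫ F.map g' ≫
      eqToHom (congrArg F.obj hy).symm := by
  subst hx; subst hy
  rw [Subsingleton.elim (α := ULift (PLift (x ≤ y))) g g']
  simp

variable {C : Type} [SmallCategory C] {D : Type} [SmallCategory D]

/-- The functor `[1]^0 ⥤ C` corresponding to an object. -/
noncomputable def objFunctor (c : C) : posetCube 0 ⥤ C := (Functor.const _).obj c

/-- Auxiliary map data for `homFunctor`. -/
def homMap {c c' : C} (f : c ⟶ c') :
    ∀ (a b : Bool), a ≤ b → (cond a c' c ⟶ cond b c' c)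
  | false, false, _ => 𝟙 c
  | false, true, _ => f
  | true, true, _ => 𝟙 c'
  | true, false, h => absurd h (by decide)

lemma homMap_id {c c' : C} (f : c ⟶ c') (a : Bool) (h : a ≤ a) :
    homMap f a a h = 𝟙 (cond a c' c) := by cases a <;> rfl

lemma homMap_comp {c c' : C} (f : c ⟶ c') (a b e : Bool) (h1 : a ≤ b)
    (h2 : b ≤ e) (h3 : a ≤ e) :
    homMap f a e h3 = homMap f a b h1 ≫ homMap f b e h2 := by
  cases a <;> cases b <;> cases e <;>
    first
      | exact absurd h1 (by decide)
      | exact absurd h2 (by decide)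
      | simp [homMap]

/-- The functor `[1]^1 ⥤ C` corresponding to a morphism. -/
noncomputable def homFunctor {c c' : C} (f : c ⟶ c') : posetCube 1 ⥤ C where
  obj x := cond (x 0) c' c
  map {x y} g := homMap f (x 0) (y 0) (leOfHom g 0)
  map_id x := homMap_id f (x 0) _
  map_comp {x y z} g h := homMap_comp f (x 0) (y 0) (z 0) _ _ _

def cfalse : posetCube 1 := fun _ => false
def ctrue : posetCube 1 := fun _ => true

noncomputable def e01 : cfalse ⟶ ctrue := homOfLE (fun _ => Bool.false_le _)

lemma homFunctor_map_e01 {c c' : C} (f : c ⟶ c') :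
    (homFunctor f).map e01 = f := rfl

end CubicalNerveFF
namespace CubicalNerveFF

variable {C : Type} [SmallCategory C] {D : Type} [SmallCategory D]

/-- Objects of the commuting square associated to a composable pair. -/
def sqObj (c c' c'' : C) (a b : Bool) : C :=
  cond b c'' (cond a c' c)

/-- Maps of the commuting square associated to a composable pair. -/
def sqMap {c c' c'' : C} (f : c ⟶ c') (g : c' ⟶ c'') :
    ∀ (a b a' b' : Bool), a ≤ a' → b ≤ b' →
      (sqObj c c' c'' a b ⟶ sqObj c c' c'' a' b')
  | false, false, false, false, _, _ => 𝟙 c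
  | false, false, true, false, _, _ => f
  | false, false, false, true, _, _ => f ≫ g
  | false, false, true, true, _, _ => f ≫ g
  | true, false, true, false, _, _ => 𝟙 c'
  | true, false, true, true, _, _ => g
  | false, true, false, true, _, _ => 𝟙 c''
  | false, true, true, true, _, _ => 𝟙 c''
  | true, true, true, true, _, _ => 𝟙 c''
  | true, _, false, _, h, _ => absurd h (by decide)
  | _, true, _, false, _, h => absurd h (by decide)

lemma sqMap_id {c c' c'' : C} (f : c ⟶ c') (g : c' ⟶ c'') (a b : Bool)
    (h1 : a ≤ a) (h2 : b ≤ b) :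
    sqMap f g a b a b h1 h2 = 𝟙 (sqObj c c' c'' a b) := by
  cases a <;> cases b <;> rfl

lemma sqMap_comp {c c' c'' : C} (f : c ⟶ c') (g : c' ⟶ c'')
    (a b a' b' a'' b'' : Bool) (h1 : a ≤ a') (h2 : b ≤ b') (h3 : a' ≤ a'')
    (h4 : b' ≤ b'') (h5 : a ≤ a'') (h6 : b ≤ b'') :
    sqMap f g a b a'' b'' h5 h6 =
      sqMap f g a b a' b' h1 h2 ≫ sqMap f g a' b' a'' b'' h3 h4 := by
  cases a <;> cases b <;> cases a' <;> cases b' <;> cases a'' <;> cases b'' <;>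
    first
      | exact absurd h1 (by decide)
      | exact absurd h2 (by decide)
      | exact absurd h3 (by decide)
      | exact absurd h4 (by decide)
      | rfl
      | exact (Category.id_comp _).symm
      | exact (Category.comp_id _).symm

/-- The square `[1]^2 ⥤ C` associated to a composable pair. -/
noncomputable def sqFunctor {c c' c'' : C} (f : c ⟶ c') (g : c' ⟶ c'') :
    posetCube 2 ⥤ C where
  obj x := sqObj c c' c'' (x 0) (x 1)
  map {x y} h := sqMap f g (x 0) (x 1) (y 0) (y 1) (leOfHom h 0) (leOfHom h 1)
  map_id x := sqMap_id f g (x 0) (x 1) _ _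
  map_comp {x y z} h h' :=
    sqMap_comp f g (x 0) (x 1) (y 0) (y 1) (z 0) (z 1) _ _ _ _ _ _

end CubicalNerveFF
namespace CubicalNerveFF

/-- Constant maps `[1]^0 → [1]^n` (the vertices) are cube maps. -/
theorem isCubeMap_const : ∀ {n : ℕ} (x : Fin n → Bool),
    IsCubeMap (fun _ : Fin 0 → Bool => x) := by
  intro n
  induction n with
  | zero =>
    intro x
    have : (fun _ : Fin 0 → Bool => x) = id := by
      funext t
      exact Subsingleton.elim (α := posetCube 0) x t
    rw [this]
    exact IsCubeMap.id 0
  | succ n ih =>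
    intro x
    have : (fun _ : Fin 0 → Bool => x)
        = cubeFace (0 : Fin (n + 1)) (x 0) ∘ (fun _ : Fin 0 → Bool => Fin.tail x) := by
      funext t
      show x = cubeFace 0 (x 0) (Fin.tail x)
      simp [cubeFace, Fin.insertNth_zero']
    rw [this]
    exact IsCubeMap.comp (ih (Fin.tail x)) (IsCubeMap.face 0 (x 0))

lemma insertNth_succ_eq {n : ℕ} (j : Fin (n + 1)) (ε : Bool) (w : Fin (n + 1) → Bool) :
    Fin.insertNth (α := fun _ => Bool) j.succ ε w
      = Fin.cons (w 0) (Fin.insertNth (α := fun _ => Bool) j ε (Fin.tail w)) := by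
  funext k
  refine Fin.cases ?_ (fun m => ?_) k
  · have h := Fin.insertNth_apply_succAbove (α := fun _ => Bool) j.succ ε w 0
    rw [Fin.succ_succAbove_zero] at h
    rw [h, Fin.cons_zero]
  · by_cases hm : m = j
    · subst hm
      rw [Fin.cons_succ, Fin.insertNth_apply_same, Fin.insertNth_apply_same]
    · obtain ⟨l, rfl⟩ := Fin.exists_succAbove_eq hm
      rw [Fin.cons_succ, Fin.insertNth_apply_succAbove, ← Fin.succ_succAbove_succ,
        Fin.insertNth_apply_succAbove]
      rfl

/-- The maps `[1]^1 → [1]^{n+1}` fixing all coordinates but one (the edges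
of the cube) are cube maps. -/
theorem isCubeMap_insert : ∀ {n : ℕ} (i : Fin (n + 1)) (w : Fin n → Bool),
    IsCubeMap (fun t : Fin 1 → Bool => Fin.insertNth i (t 0) w) := by
  intro n
  induction n with
  | zero =>
    intro i w
    have : (fun t : Fin 1 → Bool => Fin.insertNth i (t 0) w) = id := by
      funext t
      funext k
      have hk : k = i := Subsingleton.elim (α := Fin 1) k i
      rw [hk, Fin.insertNth_apply_same]
      show t 0 = t i
      rw [Subsingleton.elim (α := Fin 1) (0 : Fin 1) i]
    rw [this]
    exact IsCubeMap.id 1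
  | succ n ih =>
    intro i w
    refine Fin.cases ?_ (fun j => ?_) i
    · have : (fun t : Fin 1 → Bool => Fin.insertNth (0 : Fin (n + 2)) (t 0) w)
          = cubeFace ((0 : Fin (n + 1)).succ) (w 0) ∘
            (fun t : Fin 1 → Bool => Fin.insertNth (0 : Fin (n + 1)) (t 0) (Fin.tail w)) := by
        funext t
        show Fin.insertNth (α := fun _ => Bool) (0 : Fin (n + 2)) (t 0) w
          = Fin.insertNth (α := fun _ => Bool) ((0 : Fin (n + 1)).succ) (w 0)
              (Fin.insertNth (α := fun _ => Bool) (0 : Fin (n + 1)) (t 0) (Fin.tail w))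
        rw [insertNth_succ_eq]
        simp [Fin.insertNth_zero', Fin.tail_cons, Fin.cons_self_tail]
      rw [this]
      exact IsCubeMap.comp (ih 0 (Fin.tail w)) (IsCubeMap.face _ _)
    · have : (fun t : Fin 1 → Bool => Fin.insertNth j.succ (t 0) w)
          = cubeFace (0 : Fin (n + 2)) (w 0) ∘
            (fun t : Fin 1 → Bool => Fin.insertNth j (t 0) (Fin.tail w)) := by
        funext t
        show Fin.insertNth (α := fun _ => Bool) j.succ (t 0) w
          = Fin.insertNth (α := fun _ => Bool) (0 : Fin (n + 2)) (w 0)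
              (Fin.insertNth (α := fun _ => Bool) j (t 0) (Fin.tail w))
        rw [insertNth_succ_eq]
        simp [Fin.insertNth_zero']
      rw [this]
      exact IsCubeMap.comp (ih j (Fin.tail w)) (IsCubeMap.face _ _)

/-- The vertex `x` as a morphism `[1]^0 ⟶ [1]^n` of the cube category. -/
def vertexHom {n : ℕ} (x : posetCube n) : bx 0 ⟶ bx n :=
  ⟨fun _ => x, isCubeMap_const x⟩

/-- The edge in direction `i` through `w` as a morphism `[1]^1 ⟶ [1]^{n+1}`
of the cube category. -/
def edgeHom {n : ℕ} (i : Fin (n + 1)) (w : Fin n → Bool) : bx 1 ⟶ bx (n + 1) :=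
  ⟨fun t => Fin.insertNth i (t (0 : Fin 1)) w, isCubeMap_insert i w⟩

end CubicalNerveFF
namespace CubicalNerveFF

variable {C : Type} [SmallCategory C] {D : Type} [SmallCategory D]

lemma cube1_cases (x : posetCube 1) : x = cfalse ∨ x = ctrue := by
  cases hx : x 0
  · left
    funext j
    rw [Subsingleton.elim (α := Fin 1) j 0, hx]; rfl
  · right
    funext j
    rw [Subsingleton.elim (α := Fin 1) j 0, hx]; rfl

/-- Two functors out of `[1]` agree as soon as they agree on objects and on
the generic edge `e01`. -/
lemma functor_posetCube1_ext {E : Type} [SmallCategory E] (F G : posetCube 1 ⥤ E)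
    (hobj : ∀ x, F.obj x = G.obj x)
    (hmap : F.map e01 = eqToHom (hobj cfalse) ≫ G.map e01 ≫ eqToHom (hobj ctrue).symm) :
    F = G := by
  refine CategoryTheory.Functor.ext hobj (fun x y g => ?_)
  rcases cube1_cases x with rfl | rfl <;> rcases cube1_cases y with rfl | rfl
  · rw [hom_subsingleton g (𝟙 cfalse)]; simp
  · rw [hom_subsingleton g e01]; exact hmap
  · exact absurd (leOfHom g 0) (by decide)
  · rw [hom_subsingleton g (𝟙 ctrue)]; simp

variable (α : cubicalNerve C ⟶ cubicalNerve D)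

open Opposite

lemma alpha_nat {m n : ℕ} (h : bx m ⟶ bx n) (G : posetCube n ⥤ C) :
    α.app (op (bx m)) (functorOfCubeHom h ⋙ G)
      = functorOfCubeHom h ⋙ α.app (op (bx n)) G :=
  ConcreteCategory.congr_hom (α.naturality h.op) G

lemma vertex_comp {n : ℕ} (G : posetCube n ⥤ C) (x : posetCube n) :
    functorOfCubeHom (vertexHom x) ⋙ G = objFunctor (G.obj x) := by
  refine CategoryTheory.Functor.ext (fun t => rfl) (fun t t' g => ?_)
  erw [Category.comp_id, Category.id_comp]
  show G.map _ = _
  erw [map_eq_eqToHom G _ (rfl : x = x)]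
  rfl

/-- The object part of the recovered functor. -/
noncomputable def Fobj (c : C) : D := (α.app (op (bx 0)) (objFunctor c)).obj pt

lemma alpha_obj {n : ℕ} (G : posetCube n ⥤ C) (x : posetCube n) :
    (α.app (op (bx n)) G).obj x = Fobj α (G.obj x) := by
  have h := alpha_nat α (vertexHom x) G
  rw [vertex_comp] at h
  exact (congrArg (fun H => H.obj pt) h).symm

/-- The canonical conjugate of the action of `α` on a morphism of a cube. -/
noncomputable def bar {n : ℕ} (G : posetCube n ⥤ C) {x y : posetCube n}
    (e : x ⟶ y) : Fobj α (G.obj x) ⟶ Fobj α (G.obj y) :=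
  eqToHom (alpha_obj α G x).symm ≫ (α.app (op (bx n)) G).map e ≫
    eqToHom (alpha_obj α G y)

lemma bar_comp {n : ℕ} (G : posetCube n ⥤ C) {x y z : posetCube n}
    (e : x ⟶ y) (e' : y ⟶ z) :
    bar α G (e ≫ e') = bar α G e ≫ bar α G e' := by
  unfold bar
  erw [Functor.map_comp]
  simp

lemma bar_id {n : ℕ} (G : posetCube n ⥤ C) (x : posetCube n) :
    bar α G (𝟙 x) = 𝟙 _ := by
  unfold bar
  erw [CategoryTheory.Functor.map_id]
  simp

lemma bar_congr {n : ℕ} (G : posetCube n ⥤ C) {x y x' y' : posetCube n}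
    (e : x ⟶ y) (e' : x' ⟶ y') (hx : x = x') (hy : y = y') :
    bar α G e = eqToHom (by rw [hx]) ≫ bar α G e' ≫ eqToHom (by rw [hy]) := by
  subst hx; subst hy
  rw [hom_subsingleton e e']
  simp

lemma bar_natural {m n : ℕ} (h : bx m ⟶ bx n) {G : posetCube n ⥤ C}
    {G' : posetCube m ⥤ C} (hG : functorOfCubeHom h ⋙ G = G')
    {x y : posetCube m} (e : x ⟶ y) {x' y' : posetCube n} (e' : x' ⟶ y')
    (hx : h.1 x = x') (hy : h.1 y = y') :
    bar α G' e = eqToHom (by subst hG hx; rfl) ≫ bar α G e' ≫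
      eqToHom (by subst hG hy; rfl) := by
  subst hG; subst hx; subst hy
  unfold bar
  rw [Functor.congr_hom (alpha_nat α h G) e]
  have : (functorOfCubeHom h).map e = e' := hom_subsingleton _ _
  erw [Functor.comp_map, this]
  simp only [Category.assoc, eqToHom_trans, eqToHom_trans_assoc]
  erw [Category.assoc, eqToHom_trans]
  rfl

end CubicalNerveFF
namespace CubicalNerveFF

open Opposite

variable {C : Type} [SmallCategory C] {D : Type} [SmallCategory D]

/-- `eqToHom`-conjugation of definitionally equal morphisms. -/
lemma conj_eqToHom {E : Type} [SmallCategory E] {a b a' b' : E} (h : a = a')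
    (h' : b = b') (u : a ⟶ b) (v : a' ⟶ b') (huv : HEq u v) :
    u = eqToHom h ≫ v ≫ eqToHom h'.symm := by
  subst h; subst h'
  rw [eq_of_heq huv]
  simp

variable (α : cubicalNerve C ⟶ cubicalNerve D)

/-- The morphism part of the recovered functor. -/
noncomputable def Fmap {c c' : C} (f : c ⟶ c') : Fobj α c ⟶ Fobj α c' :=
  bar α (homFunctor f) e01

/-- The constant functor `[1]^1 ⥤ C` at `c` as a degenerate cube. -/
lemma homFunctor_id (c : C) :
    functorOfCubeHom (degHom 0 0) ⋙ objFunctor c = homFunctor (𝟙 c) := by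
  have hobj : ∀ x, (homFunctor (𝟙 c)).obj x
      = (functorOfCubeHom (degHom 0 0) ⋙ objFunctor c).obj x := fun x => by
    cases hx : x 0 <;> simp [homFunctor, objFunctor, hx] <;> rfl
  exact (functor_posetCube1_ext _ _ hobj
    (conj_eqToHom (hobj cfalse) (hobj ctrue) _ _ HEq.rfl)).symm

lemma Fmap_id (c : C) : Fmap α (𝟙 c) = 𝟙 (Fobj α c) := by
  have h := bar_natural α (degHom 0 0) (homFunctor_id c) e01 (𝟙 pt)
    (Subsingleton.elim (α := posetCube 0) _ _)
    (Subsingleton.elim (α := posetCube 0) _ _)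
  rw [Fmap, h, bar_id]
  simp only [Category.id_comp, eqToHom_trans]
  rfl

end CubicalNerveFF
namespace CubicalNerveFF

open Opposite

variable {C : Type} [SmallCategory C] {D : Type} [SmallCategory D]

lemma conj_eqToHom' {E : Type} [SmallCategory E] {a b a' b' : E} (h : a = a')
    (h' : b' = b) (u : a ⟶ b) (v : a' ⟶ b') (huv : HEq u v) :
    u = eqToHom h ≫ v ≫ eqToHom h' := by
  subst h; subst h'
  rw [eq_of_heq huv]
  simp

section Square

variable {c c' c'' : C} (f : c ⟶ c') (g : c' ⟶ c'')

lemma face_bot : functorOfCubeHom (faceHom 1 1 false) ⋙ sqFunctor f g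
    = homFunctor f := by
  have hobj : ∀ x, (functorOfCubeHom (faceHom 1 1 false) ⋙ sqFunctor f g).obj x
      = (homFunctor f).obj x := fun x => by
    rcases cube1_cases x with rfl | rfl <;> rfl
  exact functor_posetCube1_ext _ _ hobj
    (conj_eqToHom (hobj cfalse) (hobj ctrue) _ _ HEq.rfl)

lemma face_right : functorOfCubeHom (faceHom 1 0 true) ⋙ sqFunctor f g
    = homFunctor g := by
  have hobj : ∀ x, (functorOfCubeHom (faceHom 1 0 true) ⋙ sqFunctor f g).obj x
      = (homFunctor g).obj x := fun x => by
    rcases cube1_cases x with rfl | rfl <;> rfl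
  exact functor_posetCube1_ext _ _ hobj
    (conj_eqToHom (hobj cfalse) (hobj ctrue) _ _ HEq.rfl)

lemma face_left : functorOfCubeHom (faceHom 1 0 false) ⋙ sqFunctor f g
    = homFunctor (f ≫ g) := by
  have hobj : ∀ x, (functorOfCubeHom (faceHom 1 0 false) ⋙ sqFunctor f g).obj x
      = (homFunctor (f ≫ g)).obj x := fun x => by
    rcases cube1_cases x with rfl | rfl <;> rfl
  exact functor_posetCube1_ext _ _ hobj
    (conj_eqToHom (hobj cfalse) (hobj ctrue) _ _ HEq.rfl)

lemma face_top : functorOfCubeHom (faceHom 1 1 true) ⋙ sqFunctor f g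
    = homFunctor (𝟙 c'') := by
  have hobj : ∀ x, (functorOfCubeHom (faceHom 1 1 true) ⋙ sqFunctor f g).obj x
      = (homFunctor (𝟙 c'')).obj x := fun x => by
    rcases cube1_cases x with rfl | rfl <;> rfl
  exact functor_posetCube1_ext _ _ hobj
    (conj_eqToHom (hobj cfalse) (hobj ctrue) _ _ HEq.rfl)

end Square

/-- Vertices of the square. -/
def vtx (a b : Bool) : posetCube 2 := Fin.cons a (fun _ => b)

lemma eq_of_01 {u v : posetCube 2} (h0 : u 0 = v 0) (h1 : u 1 = v 1) : u = v :=
  funext fun j => by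
    refine Fin.cases h0 (fun j' => ?_) j
    rw [Subsingleton.elim (α := Fin 1) j' 0]
    exact h1

lemma vtx_le {a b a' b' : Bool} (h0 : a ≤ a') (h1 : b ≤ b') :
    vtx a b ≤ vtx a' b' := fun j => by
  refine Fin.cases ?_ (fun j' => ?_) j
  · exact h0
  · rw [Subsingleton.elim (α := Fin 1) j' 0]
    exact h1

noncomputable def e_b : vtx false false ⟶ vtx true false :=
  homOfLE (vtx_le (Bool.false_le _) le_rfl)
noncomputable def e_r : vtx true false ⟶ vtx true true :=
  homOfLE (vtx_le le_rfl (Bool.false_le _))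
noncomputable def e_l : vtx false false ⟶ vtx false true :=
  homOfLE (vtx_le le_rfl (Bool.false_le _))
noncomputable def e_t : vtx false true ⟶ vtx true true :=
  homOfLE (vtx_le (Bool.false_le _) le_rfl)

variable (α : cubicalNerve C ⟶ cubicalNerve D)

lemma Fmap_comp {c c' c'' : C} (f : c ⟶ c') (g : c' ⟶ c'') :
    Fmap α (f ≫ g) = Fmap α f ≫ Fmap α g := by
  have hb : Fmap α f = bar α (sqFunctor f g) e_b := by
    rw [show Fmap α f = _ from bar_natural α (faceHom 1 1 false) (face_bot f g)
      e01 e_b (eq_of_01 rfl rfl) (eq_of_01 rfl rfl)]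
    exact (conj_eqToHom' _ _ _ _ HEq.rfl).symm
  have hr : Fmap α g = bar α (sqFunctor f g) e_r := by
    rw [show Fmap α g = _ from bar_natural α (faceHom 1 0 true) (face_right f g)
      e01 e_r (eq_of_01 rfl rfl) (eq_of_01 rfl rfl)]
    exact (conj_eqToHom' _ _ _ _ HEq.rfl).symm
  have hl : Fmap α (f ≫ g) = bar α (sqFunctor f g) e_l := by
    rw [show Fmap α (f ≫ g) = _ from bar_natural α (faceHom 1 0 false)
      (face_left f g) e01 e_l (eq_of_01 rfl rfl) (eq_of_01 rfl rfl)]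
    exact (conj_eqToHom' _ _ _ _ HEq.rfl).symm
  have ht : Fmap α (𝟙 c'') = bar α (sqFunctor f g) e_t := by
    rw [show Fmap α (𝟙 c'') = _ from bar_natural α (faceHom 1 1 true)
      (face_top f g) e01 e_t (eq_of_01 rfl rfl) (eq_of_01 rfl rfl)]
    exact (conj_eqToHom' _ _ _ _ HEq.rfl).symm
  rw [Fmap_id] at ht
  have key : bar α (sqFunctor f g) e_l ≫ bar α (sqFunctor f g) e_t
      = bar α (sqFunctor f g) e_b ≫ bar α (sqFunctor f g) e_r := by
    rw [← bar_comp, ← bar_comp, hom_subsingleton (e_l ≫ e_t) (e_b ≫ e_r)]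
  erw [hl, hb, hr, ← key, ← ht]
  exact (Category.comp_id _).symm

end CubicalNerveFF
namespace CubicalNerveFF

open Opposite

variable {C : Type} [SmallCategory C] {D : Type} [SmallCategory D]
variable (α : cubicalNerve C ⟶ cubicalNerve D)

/-- The functor recovered from a natural transformation of cubical nerves. -/
noncomputable def Fnerve : C ⥤ D where
  obj := Fobj α
  map := Fmap α
  map_id := Fmap_id α
  map_comp := Fmap_comp α

lemma edge_comp {n : ℕ} (G : posetCube (n + 1) ⥤ C) (i : Fin (n + 1))
    (w : Fin n → Bool) {x0 x1 : posetCube (n + 1)}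
    (hx0 : x0 = Fin.insertNth i false w) (hx1 : x1 = Fin.insertNth i true w)
    (e : x0 ⟶ x1) :
    functorOfCubeHom (edgeHom i w) ⋙ G = homFunctor (G.map e) := by
  subst hx0; subst hx1
  have hobj : ∀ t, (functorOfCubeHom (edgeHom i w) ⋙ G).obj t
      = (homFunctor (G.map e)).obj t := fun t => by
    rcases cube1_cases t with rfl | rfl <;> rfl
  refine functor_posetCube1_ext _ _ hobj
    (conj_eqToHom (hobj cfalse) (hobj ctrue) _ _ ?_)
  exact heq_of_eq (congrArg G.map (hom_subsingleton _ e))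

lemma bar_edge {n : ℕ} (G : posetCube (n + 1) ⥤ C) (i : Fin (n + 1))
    (w : Fin n → Bool) {x0 x1 : posetCube (n + 1)}
    (hx0 : x0 = Fin.insertNth i false w) (hx1 : x1 = Fin.insertNth i true w)
    (e : x0 ⟶ x1) :
    Fmap α (G.map e) = bar α G e := by
  have hc := edge_comp G i w hx0 hx1 e
  subst hx0; subst hx1
  rw [show Fmap α (G.map e) = _ from bar_natural α (edgeHom i w) hc e01 e rfl rfl]
  exact (conj_eqToHom' _ _ _ _ HEq.rfl).symm

lemma not_true_le_false : ¬((true : Bool) ≤ false) := by decide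

open Classical in
lemma bar_eq_Fmap : ∀ (k : ℕ) {n : ℕ} (G : posetCube n ⥤ C)
    (x y : posetCube n) (e : x ⟶ y),
    (Finset.filter (fun i => x i ≠ y i) Finset.univ).card ≤ k →
    Fmap α (G.map e) = bar α G e := by
  intro k
  induction k with
  | zero =>
    intro n G x y e hcard
    have hxy : x = y := by
      funext i
      by_contra hne
      have hmem : i ∈ Finset.filter (fun i => x i ≠ y i) Finset.univ := by
        simp [hne]
      have := Finset.card_pos.mpr ⟨i, hmem⟩
      omega
    subst hxy
    rw [hom_subsingleton e (𝟙 x), G.map_id, Fmap_id, bar_id]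
  | succ k ih =>
    intro n G x y e hcard
    by_cases hxy : x = y
    · subst hxy
      rw [hom_subsingleton e (𝟙 x), G.map_id, Fmap_id, bar_id]
    · have hex : ∃ i, x i ≠ y i := by
        by_contra hno
        push_neg at hno
        exact hxy (funext hno)
      obtain ⟨i, hi⟩ := hex
      cases n with
      | zero => exact i.elim0
      | succ m =>
        have hxle : x ≤ y := leOfHom e
        have hxiyi := hxle i
        have hxi : x i = false := by
          cases hx' : x i
          · rfl
          · rw [hx'] at hxiyi hi
            cases hy' : y i
            · rw [hy'] at hxiyi
              exact absurd hxiyi not_true_le_false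
            · rw [hy'] at hi; exact absurd rfl hi
        have hyi : y i = true := by
          cases hy' : y i
          · rw [hxi, hy'] at hi; exact absurd rfl hi
          · rfl
        set z := Function.update x i true with hz
        have hxz : x ≤ z := fun j => by
          rw [hz]
          by_cases hj : j = i
          · subst hj; erw [Function.update_self]; exact Bool.le_true _
          · erw [Function.update_of_ne hj]
        have hzy : z ≤ y := fun j => by
          rw [hz]
          by_cases hj : j = i
          · subst hj; erw [Function.update_self, hyi]
          · erw [Function.update_of_ne hj]; exact hxle j
        have hw1 : Fin.insertNth (α := fun _ => Bool) i false (i.removeNth x) = x := by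
          erw [Fin.insertNth_removeNth, ← hxi, Function.update_eq_self]
        have hw2 : Fin.insertNth (α := fun _ => Bool) i true (i.removeNth x) = z := by
          erw [Fin.insertNth_removeNth]
        have step := bar_edge α G i (i.removeNth x) hw1.symm hw2.symm (homOfLE hxz)
        have hcard2 : (Finset.filter (fun j => z j ≠ y j) Finset.univ).card ≤ k := by
          have hsub : Finset.filter (fun j => z j ≠ y j) Finset.univ ⊆
              (Finset.filter (fun j => x j ≠ y j) Finset.univ).erase i := by
            intro j hj
            simp only [Finset.mem_filter, Finset.mem_univ, true_and] at hj
            have hji : j ≠ i := by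
              rintro rfl
              exact hj (by erw [hz, Function.update_self, hyi])
            simp only [Finset.mem_erase, Finset.mem_filter, Finset.mem_univ, true_and]
            refine ⟨hji, ?_⟩
            erw [hz, Function.update_of_ne hji] at hj; exact hj
          have hle := Finset.card_le_card hsub
          rw [Finset.card_erase_of_mem (by simp [hi])] at hle
          omega
        have htail := ih G z y (homOfLE hzy) hcard2
        erw [hom_subsingleton e (homOfLE hxz ≫ homOfLE hzy), G.map_comp,
          Fmap_comp, bar_comp, step, htail]

end CubicalNerveFF
/-- The cubical nerve `N : Cat → cSet`,
`(N C)_n = Cat([1]^n, C)`, is full and faithful: for all small categories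
`C, D`, the map `(C ⥤ D) → (N C ⟶ N D)` is a bijection. -/
theorem cubicalNerve_fullyFaithful (C D : Type) [SmallCategory C]
    [SmallCategory D] :
    Function.Bijective (fun F : C ⥤ D => cubicalNerveMap F) := by
  constructor
  · intro F F' h
    have happ : ∀ {n : ℕ} (G : posetCube n ⥤ C), G ⋙ F = G ⋙ F' := by
      intro n G
      exact congrFun (congrArg (fun β => β.app (Opposite.op (bx n))) h) G
    have hobj : ∀ c : C, F.obj c = F'.obj c := fun c =>
      congrArg (fun H => H.obj CubicalNerveFF.pt) (happ (CubicalNerveFF.objFunctor c))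
    refine CategoryTheory.Functor.ext hobj ?_
    intro c c' f
    exact Functor.congr_hom (happ (CubicalNerveFF.homFunctor f)) CubicalNerveFF.e01
  · intro α
    refine ⟨CubicalNerveFF.Fnerve α, ?_⟩
    apply NatTrans.ext
    funext b
    refine ConcreteCategory.hom_ext _ _ (fun G => ?_)
    show G ⋙ CubicalNerveFF.Fnerve α = α.app b G
    refine CategoryTheory.Functor.ext
      (fun x => (CubicalNerveFF.alpha_obj α G x).symm) ?_
    intro x y e
    rw [show (G ⋙ CubicalNerveFF.Fnerve α).map e
        = CubicalNerveFF.Fmap α (G.map e) from rfl,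
      CubicalNerveFF.bar_eq_Fmap α _ G x y e le_rfl]
    rfl
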